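/- Let p, q ≥ 1, let Θ be a real symmetric p×p matrix and Ψ a real symmetric q×q matrix, let 0 < λ̲ ≤ λ̄ be reals with λ̲·I_{pq} ⪯ Θ⊕Ψ ⪯ λ̄·I_{pq}, and let ρ ≥ 0 satisfy tr(Ψ) = ρ·tr(Θ). Then the eigenvalues of Θ and Ψ are bounded as follows: (λ̲ − (ρp/(q+ρp))·λ̄)·I_p ⪯ Θ ⪯ (λ̄ − (ρp/(q+ρp))·λ̲)·I_p and (λ̲ − (q/(q+ρp))·λ̄)·I_q ⪯ Ψ ⪯ (λ̄ − (q/(q+ρp))·λ̲)·I_q. -/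

import Mathlib

open Matrix
open scoped Kronecker

namespace EiGLasso

/-- The Kronecker sum `Θ ⊕ Ψ = Θ ⊗ I_q + I_p ⊗ Ψ`. -/
def kronSum {p q : ℕ} (A : Matrix (Fin p) (Fin p) ℝ) (B : Matrix (Fin q) (Fin q) ℝ) :
    Matrix (Fin p × Fin q) (Fin p × Fin q) ℝ :=
  A ⊗ₖ (1 : Matrix (Fin q) (Fin q) ℝ) + (1 : Matrix (Fin p) (Fin p) ℝ) ⊗ₖ B

/-- The `pq × p` selection matrix `I_p ⊗ e_{q,i}`, where `e_{q,i}` is the `i`-th one-hot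
vector in `ℝ^q`.  Row `(j', i')` (i.e. row `(j'-1)q + i'`), column `j`. -/
def selTheta (p q : ℕ) (i : Fin q) : Matrix (Fin p × Fin q) (Fin p) ℝ :=
  Matrix.of fun x j => if x = (j, i) then (1 : ℝ) else 0

/-- The `pq × q` selection matrix `e_{p,j} ⊗ I_q`. -/
def selPsi (p q : ℕ) (j : Fin p) : Matrix (Fin p × Fin q) (Fin q) ℝ :=
  Matrix.of fun x i => if x = (j, i) then (1 : ℝ) else 0

/-- `P_Θ = ∑_{i=1}^q I_p ⊗ e_{q,i} ⊗ I_p ⊗ e_{q,i}`, a `p²q² × p²` matrix. -/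
def Ptheta (p q : ℕ) : Matrix ((Fin p × Fin q) × (Fin p × Fin q)) (Fin p × Fin p) ℝ :=
  ∑ i : Fin q, (selTheta p q i) ⊗ₖ (selTheta p q i)

/-- `P_Ψ = ∑_{j=1}^p e_{p,j} ⊗ I_q ⊗ e_{p,j} ⊗ I_q`, a `p²q² × q²` matrix. -/
def Ppsi (p q : ℕ) : Matrix ((Fin p × Fin q) × (Fin p × Fin q)) (Fin q × Fin q) ℝ :=
  ∑ j : Fin p, (selPsi p q j) ⊗ₖ (selPsi p q j)

/-- Column-stacking vectorization: `vec(A)` at index `(j, i)` (i.e. `(j-1)m + i`) is `A i j`. -/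
def vec {m n : Type*} (A : Matrix m n ℝ) : n × m → ℝ := fun x => A x.2 x.1

lemma dot_split {p q : ℕ} (a c : Fin p → ℝ) (b d : Fin q → ℝ) :
    (fun w : Fin p × Fin q => a w.1 * b w.2) ⬝ᵥ (fun w => c w.1 * d w.2)
      = (a ⬝ᵥ c) * (b ⬝ᵥ d) := by
  simp only [dotProduct, Fintype.sum_prod_type, Finset.sum_mul, Finset.mul_sum]
  rw [Finset.sum_comm]
  exact Finset.sum_congr rfl fun i _ => Finset.sum_congr rfl fun j _ => by ring

lemma kron_left_mulVec {p q : ℕ} (Θ : Matrix (Fin p) (Fin p) ℝ) (x : Fin p → ℝ) (y : Fin q → ℝ) :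
    ((Θ ⊗ₖ (1 : Matrix (Fin q) (Fin q) ℝ)) *ᵥ fun w => x w.1 * y w.2)
      = fun w => (Θ *ᵥ x) w.1 * y w.2 := by
  funext w
  simp only [mulVec, dotProduct, Fintype.sum_prod_type, kroneckerMap_apply, Matrix.one_apply,
    ite_mul, mul_ite, mul_zero, zero_mul, one_mul, Finset.sum_ite_eq', Finset.sum_ite_eq,
    Finset.mem_univ, if_true]
  rw [Finset.sum_mul]
  exact Finset.sum_congr rfl fun j _ => by ring

lemma kron_right_mulVec {p q : ℕ} (Ψ : Matrix (Fin q) (Fin q) ℝ) (x : Fin p → ℝ) (y : Fin q → ℝ) :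
    (((1 : Matrix (Fin p) (Fin p) ℝ) ⊗ₖ Ψ) *ᵥ fun w => x w.1 * y w.2)
      = fun w => x w.1 * (Ψ *ᵥ y) w.2 := by
  funext w
  simp only [mulVec, dotProduct, Fintype.sum_prod_type, kroneckerMap_apply, Matrix.one_apply,
    ite_mul, mul_ite, mul_zero, zero_mul, one_mul]
  rw [Finset.sum_comm]
  simp only [Finset.sum_ite_eq, Finset.mem_univ, if_true]
  rw [Finset.mul_sum]
  exact Finset.sum_congr rfl fun i _ => by ring

lemma scalar_lo (m D κ llo lhi n T u : ℝ) (hm : 0 < m) (hD : 0 < D) (hn : 0 ≤ n)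
    (hA : m * (llo * n) ≤ m * T + n * u) (hB : D * u ≤ κ * (m * lhi)) :
    (llo - κ / D * lhi) * n ≤ T := by
  have hu : u ≤ κ / D * (m * lhi) := by
    rw [div_mul_eq_mul_div, le_div_iff₀ hD]; nlinarith
  have h2 : m * ((llo - κ / D * lhi) * n) ≤ m * T := by
    nlinarith [mul_le_mul_of_nonneg_left hu hn]
  exact le_of_mul_le_mul_left h2 hm

lemma scalar_hi (m D κ llo lhi n T u : ℝ) (hm : 0 < m) (hD : 0 < D) (hn : 0 ≤ n)
    (hA : m * T + n * u ≤ m * (lhi * n)) (hB : κ * (m * llo) ≤ D * u) :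
    T ≤ (lhi - κ / D * llo) * n := by
  have hu : κ / D * (m * llo) ≤ u := by
    rw [div_mul_eq_mul_div, div_le_iff₀ hD]; nlinarith
  have h2 : m * T ≤ m * ((lhi - κ / D * llo) * n) := by
    nlinarith [mul_le_mul_of_nonneg_left hu hn]
  exact le_of_mul_le_mul_left h2 hm

lemma sum_bound_lo {k : ℕ} (c d : ℝ) (f : Fin k → ℝ) (h : ∀ i, c ≤ d + f i) :
    (k : ℝ) * c ≤ (k : ℝ) * d + ∑ i, f i := by
  have h2 := Finset.sum_le_sum (s := (Finset.univ : Finset (Fin k))) (fun i _ => h i)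
  simpa [Finset.sum_add_distrib, Finset.sum_const, nsmul_eq_mul] using h2

lemma sum_bound_hi {k : ℕ} (c d : ℝ) (f : Fin k → ℝ) (h : ∀ i, d + f i ≤ c) :
    (k : ℝ) * d + ∑ i, f i ≤ (k : ℝ) * c := by
  have h2 := Finset.sum_le_sum (s := (Finset.univ : Finset (Fin k))) (fun i _ => h i)
  simpa [Finset.sum_add_distrib, Finset.sum_const, nsmul_eq_mul] using h2

lemma dot_self_nonneg {k : ℕ} (x : Fin k → ℝ) : 0 ≤ x ⬝ᵥ x :=
  Finset.sum_nonneg fun i _ => mul_self_nonneg (x i)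

theorem eigenvalue_bounds_trace_ratio (p q : ℕ) (hp : 1 ≤ p) (hq : 1 ≤ q)
    (Θ : Matrix (Fin p) (Fin p) ℝ) (Ψ : Matrix (Fin q) (Fin q) ℝ)
    (hΘ : Θ.IsSymm) (hΨ : Ψ.IsSymm)
    (llo lhi : ℝ) (h0 : 0 < llo) (hle : llo ≤ lhi)
    (hlow : (kronSum Θ Ψ - llo • (1 : Matrix (Fin p × Fin q) (Fin p × Fin q) ℝ)).PosSemidef)
    (hhigh : (lhi • (1 : Matrix (Fin p × Fin q) (Fin p × Fin q) ℝ) - kronSum Θ Ψ).PosSemidef)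
    (ρ : ℝ) (hρ : 0 ≤ ρ) (htr : Ψ.trace = ρ * Θ.trace) :
    (Θ - (llo - (ρ * (p : ℝ) / ((q : ℝ) + ρ * (p : ℝ))) * lhi)
        • (1 : Matrix (Fin p) (Fin p) ℝ)).PosSemidef ∧
    ((lhi - (ρ * (p : ℝ) / ((q : ℝ) + ρ * (p : ℝ))) * llo)
        • (1 : Matrix (Fin p) (Fin p) ℝ) - Θ).PosSemidef ∧
    (Ψ - (llo - ((q : ℝ) / ((q : ℝ) + ρ * (p : ℝ))) * lhi)
        • (1 : Matrix (Fin q) (Fin q) ℝ)).PosSemidef ∧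
    ((lhi - ((q : ℝ) / ((q : ℝ) + ρ * (p : ℝ))) * llo)
        • (1 : Matrix (Fin q) (Fin q) ℝ) - Ψ).PosSemidef := by
  have hp0 : (0 : ℝ) < p := by exact_mod_cast hp
  have hq0 : (0 : ℝ) < q := by exact_mod_cast hq
  have hD : (0 : ℝ) < (q : ℝ) + ρ * p := by positivity
  -- quadratic form of the Kronecker sum on a product vector
  have hpqform : ∀ (x : Fin p → ℝ) (y : Fin q → ℝ),
      (fun w : Fin p × Fin q => x w.1 * y w.2) ⬝ᵥ (kronSum Θ Ψ *ᵥ fun w => x w.1 * y w.2)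
        = (x ⬝ᵥ Θ *ᵥ x) * (y ⬝ᵥ y) + (x ⬝ᵥ x) * (y ⬝ᵥ Ψ *ᵥ y) := by
    intro x y
    rw [kronSum, add_mulVec, dotProduct_add, kron_left_mulVec, kron_right_mulVec,
      dot_split, dot_split]
  have hL : ∀ (x : Fin p → ℝ) (y : Fin q → ℝ),
      llo * ((x ⬝ᵥ x) * (y ⬝ᵥ y)) ≤ (x ⬝ᵥ Θ *ᵥ x) * (y ⬝ᵥ y) + (x ⬝ᵥ x) * (y ⬝ᵥ Ψ *ᵥ y) := by
    intro x y
    have h := hlow.dotProduct_mulVec_nonneg (fun w => x w.1 * y w.2)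
    simp only [star_trivial, sub_mulVec, dotProduct_sub, smul_mulVec, one_mulVec,
      dotProduct_smul, smul_eq_mul] at h
    rw [hpqform x y, dot_split x x y y] at h
    linarith
  have hH : ∀ (x : Fin p → ℝ) (y : Fin q → ℝ),
      (x ⬝ᵥ Θ *ᵥ x) * (y ⬝ᵥ y) + (x ⬝ᵥ x) * (y ⬝ᵥ Ψ *ᵥ y) ≤ lhi * ((x ⬝ᵥ x) * (y ⬝ᵥ y)) := by
    intro x y
    have h := hhigh.dotProduct_mulVec_nonneg (fun w => x w.1 * y w.2)
    simp only [star_trivial, sub_mulVec, dotProduct_sub, smul_mulVec, one_mulVec,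
      dotProduct_smul, smul_eq_mul] at h
    rw [hpqform x y, dot_split x x y y] at h
    linarith
  -- specialize to coordinate vectors
  have hLq : ∀ (x : Fin p → ℝ) (i : Fin q),
      llo * (x ⬝ᵥ x) ≤ (x ⬝ᵥ Θ *ᵥ x) + (x ⬝ᵥ x) * Ψ i i := by
    intro x i
    have h := hL x (Pi.single i 1)
    simpa [single_dotProduct, mulVec_single, Pi.single_eq_same] using h
  have hHq : ∀ (x : Fin p → ℝ) (i : Fin q),
      (x ⬝ᵥ Θ *ᵥ x) + (x ⬝ᵥ x) * Ψ i i ≤ lhi * (x ⬝ᵥ x) := by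
    intro x i
    have h := hH x (Pi.single i 1)
    simpa [single_dotProduct, mulVec_single, Pi.single_eq_same] using h
  have hLp : ∀ (y : Fin q → ℝ) (j : Fin p),
      llo * (y ⬝ᵥ y) ≤ (y ⬝ᵥ y) * Θ j j + (y ⬝ᵥ Ψ *ᵥ y) := by
    intro y j
    have h := hL (Pi.single j 1) y
    simpa [single_dotProduct, mulVec_single, Pi.single_eq_same, mul_comm] using h
  have hHp : ∀ (y : Fin q → ℝ) (j : Fin p),
      (y ⬝ᵥ y) * Θ j j + (y ⬝ᵥ Ψ *ᵥ y) ≤ lhi * (y ⬝ᵥ y) := by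
    intro y j
    have h := hH (Pi.single j 1) y
    simpa [single_dotProduct, mulVec_single, Pi.single_eq_same, mul_comm] using h
  -- summed versions
  have hsumΨ : ∀ c : ℝ, ∑ i : Fin q, c * Ψ i i = c * Ψ.trace := by
    intro c; simp [Matrix.trace, Matrix.diag, Finset.mul_sum]
  have hsumΘ : ∀ c : ℝ, ∑ j : Fin p, c * Θ j j = c * Θ.trace := by
    intro c; simp [Matrix.trace, Matrix.diag, Finset.mul_sum]
  have hAlo : ∀ x : Fin p → ℝ,
      (q : ℝ) * (llo * (x ⬝ᵥ x)) ≤ (q : ℝ) * (x ⬝ᵥ Θ *ᵥ x) + (x ⬝ᵥ x) * Ψ.trace := by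
    intro x
    have h := sum_bound_lo (llo * (x ⬝ᵥ x)) (x ⬝ᵥ Θ *ᵥ x) (fun i => (x ⬝ᵥ x) * Ψ i i)
      (hLq x)
    rwa [hsumΨ] at h
  have hAhi : ∀ x : Fin p → ℝ,
      (q : ℝ) * (x ⬝ᵥ Θ *ᵥ x) + (x ⬝ᵥ x) * Ψ.trace ≤ (q : ℝ) * (lhi * (x ⬝ᵥ x)) := by
    intro x
    have h := sum_bound_hi (lhi * (x ⬝ᵥ x)) (x ⬝ᵥ Θ *ᵥ x) (fun i => (x ⬝ᵥ x) * Ψ i i)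
      (hHq x)
    rwa [hsumΨ] at h
  have hBlo : ∀ y : Fin q → ℝ,
      (p : ℝ) * (llo * (y ⬝ᵥ y)) ≤ (p : ℝ) * (y ⬝ᵥ Ψ *ᵥ y) + (y ⬝ᵥ y) * Θ.trace := by
    intro y
    have h := sum_bound_lo (llo * (y ⬝ᵥ y)) (y ⬝ᵥ Ψ *ᵥ y) (fun j => (y ⬝ᵥ y) * Θ j j)
      (fun j => by have := hLp y j; linarith)
    rwa [hsumΘ] at h
  have hBhi : ∀ y : Fin q → ℝ,
      (p : ℝ) * (y ⬝ᵥ Ψ *ᵥ y) + (y ⬝ᵥ y) * Θ.trace ≤ (p : ℝ) * (lhi * (y ⬝ᵥ y)) := by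
    intro y
    have h := sum_bound_hi (lhi * (y ⬝ᵥ y)) (y ⬝ᵥ Ψ *ᵥ y) (fun j => (y ⬝ᵥ y) * Θ j j)
      (fun j => by have := hHp y j; linarith)
    rwa [hsumΘ] at h
  -- trace bounds
  have heΘ : ∀ j : Fin p, (Pi.single j (1:ℝ)) ⬝ᵥ (Θ *ᵥ Pi.single j 1) = Θ j j := by
    intro j; simp [single_dotProduct, mulVec_single, Pi.single_eq_same]
  have heself : ∀ j : Fin p, (Pi.single j (1:ℝ)) ⬝ᵥ (Pi.single j (1:ℝ)) = 1 := by
    intro j; simp [single_dotProduct, Pi.single_eq_same]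
  have htrhi : ((q : ℝ) + ρ * p) * Θ.trace ≤ (p : ℝ) * ((q : ℝ) * lhi) := by
    have h := sum_bound_hi ((q : ℝ) * lhi) Ψ.trace (fun j => (q : ℝ) * Θ j j)
      (fun j => by
        have h2 := hAhi (Pi.single j 1)
        rw [heΘ j, heself j] at h2
        linarith)
    rw [hsumΘ] at h
    nlinarith
  have htrlo : (p : ℝ) * ((q : ℝ) * llo) ≤ ((q : ℝ) + ρ * p) * Θ.trace := by
    have h := sum_bound_lo ((q : ℝ) * llo) Ψ.trace (fun j => (q : ℝ) * Θ j j)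
      (fun j => by
        have h2 := hAlo (Pi.single j 1)
        rw [heΘ j, heself j] at h2
        linarith)
    rw [hsumΘ] at h
    nlinarith
  -- hermitian facts
  have hΘh : Θ.IsHermitian := by
    show Θᴴ = Θ
    ext i j
    simpa [Matrix.conjTranspose_apply] using congrFun (congrFun hΘ i) j
  have hΨh : Ψ.IsHermitian := by
    show Ψᴴ = Ψ
    ext i j
    simpa [Matrix.conjTranspose_apply] using congrFun (congrFun hΨ i) j
  have hsm : ∀ (k : ℕ) (c : ℝ), ((c • (1 : Matrix (Fin k) (Fin k) ℝ))).IsHermitian := by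
    intro k c
    show _ = _
    simp
  refine ⟨posSemidef_iff_dotProduct_mulVec.mpr ⟨hΘh.sub (hsm p _), fun x => ?_⟩,
    posSemidef_iff_dotProduct_mulVec.mpr ⟨(hsm p _).sub hΘh, fun x => ?_⟩,
    posSemidef_iff_dotProduct_mulVec.mpr ⟨hΨh.sub (hsm q _), fun y => ?_⟩,
    posSemidef_iff_dotProduct_mulVec.mpr ⟨(hsm q _).sub hΨh, fun y => ?_⟩⟩
  · have key : (llo - ρ * (p : ℝ) / ((q : ℝ) + ρ * p) * lhi) * (x ⬝ᵥ x) ≤ x ⬝ᵥ Θ *ᵥ x :=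
      scalar_lo (q : ℝ) _ (ρ * p) llo lhi _ _ Ψ.trace hq0 hD (dot_self_nonneg x)
        (hAlo x) (by nlinarith)
    simp only [star_trivial, sub_mulVec, dotProduct_sub, smul_mulVec, one_mulVec,
      dotProduct_smul, smul_eq_mul]
    linarith
  · have key : x ⬝ᵥ Θ *ᵥ x ≤ (lhi - ρ * (p : ℝ) / ((q : ℝ) + ρ * p) * llo) * (x ⬝ᵥ x) :=
      scalar_hi (q : ℝ) _ (ρ * p) llo lhi _ _ Ψ.trace hq0 hD (dot_self_nonneg x)
        (hAhi x) (by nlinarith)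
    simp only [star_trivial, sub_mulVec, dotProduct_sub, smul_mulVec, one_mulVec,
      dotProduct_smul, smul_eq_mul]
    linarith
  · have key : (llo - (q : ℝ) / ((q : ℝ) + ρ * p) * lhi) * (y ⬝ᵥ y) ≤ y ⬝ᵥ Ψ *ᵥ y :=
      scalar_lo (p : ℝ) _ (q : ℝ) llo lhi _ _ Θ.trace hp0 hD (dot_self_nonneg y)
        (hBlo y) (by nlinarith)
    simp only [star_trivial, sub_mulVec, dotProduct_sub, smul_mulVec, one_mulVec,
      dotProduct_smul, smul_eq_mul]
    linarith
  · have key : y ⬝ᵥ Ψ *ᵥ y ≤ (lhi - (q : ℝ) / ((q : ℝ) + ρ * p) * llo) * (y ⬝ᵥ y) :=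
      scalar_hi (p : ℝ) _ (q : ℝ) llo lhi _ _ Θ.trace hp0 hD (dot_self_nonneg y)
        (hBhi y) (by nlinarith)
    simp only [star_trivial, sub_mulVec, dotProduct_sub, smul_mulVec, one_mulVec,
      dotProduct_smul, smul_eq_mul]
    linarith

end EiGLasso
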